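/- Let c(p,q') = (1/α) log(1 + α p·q') on (0,∞)ⁿ × (0,∞)ⁿ with α > 0. Then the mixed second partials are c_{i:j̄} = δᵢʲ/(1 + α p·q') − α pʲ q'^ī/(1 + α p·q')², and the Christoffel symbols of the Kim–McCann Levi-Civita connection satisfy Γ̄_{ij}^k = −(α/(1+α p·q'))(q'^ī δⱼᵏ + q'^j̄ δᵢᵏ) and Γ̄_{īj̄}^{k̄} = −(α/(1+α p·q'))(pⁱ δⱼᵏ + pʲ δᵢᵏ). -/

import Mathlib

noncomputable def pd1 {n : ℕ} (F : (Fin n → ℝ) → (Fin n → ℝ) → ℝ) (i : Fin n) :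
    (Fin n → ℝ) → (Fin n → ℝ) → ℝ :=
  fun x y => fderiv ℝ (fun x' => F x' y) x (Pi.single i 1)

noncomputable def pd2 {n : ℕ} (F : (Fin n → ℝ) → (Fin n → ℝ) → ℝ) (j : Fin n) :
    (Fin n → ℝ) → (Fin n → ℝ) → ℝ :=
  fun x y => fderiv ℝ (fun y' => F x y') y (Pi.single j 1)

open Filter

namespace LogCostAux

variable {n : ℕ}

noncomputable def dotCLM (y : Fin n → ℝ) : (Fin n → ℝ) →L[ℝ] ℝ :=
  ∑ m, y m • ContinuousLinearMap.proj m

lemma dotCLM_apply (y v : Fin n → ℝ) : dotCLM y v = ∑ m, y m * v m := by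
  simp [dotCLM]

lemma dotCLM_single (y : Fin n → ℝ) (i : Fin n) : dotCLM y (Pi.single i 1) = y i := by
  simp [dotCLM_apply, Pi.single_apply]

lemma hasFDerivAt_L1 (α : ℝ) (y x : Fin n → ℝ) :
    HasFDerivAt (fun x' : Fin n → ℝ => 1 + α * ∑ m, x' m * y m) (α • dotCLM y) x := by
  have h : HasFDerivAt (fun x' : Fin n → ℝ => ∑ m, x' m * y m) (dotCLM y) x := by
    have : (fun x' : Fin n → ℝ => ∑ m, x' m * y m) = fun x' => dotCLM y x' := by
      funext x'; simp [dotCLM_apply, mul_comm]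
    rw [this]; exact (dotCLM y).hasFDerivAt
  exact (h.const_mul α).const_add 1

lemma hasFDerivAt_L2 (α : ℝ) (x y : Fin n → ℝ) :
    HasFDerivAt (fun y' : Fin n → ℝ => 1 + α * ∑ m, x m * y' m) (α • dotCLM x) y := by
  have h : HasFDerivAt (fun y' : Fin n → ℝ => ∑ m, x m * y' m) (dotCLM x) y := by
    have : (fun y' : Fin n → ℝ => ∑ m, x m * y' m) = fun y' => dotCLM x y' := by
      funext y'; simp [dotCLM_apply]
    rw [this]; exact (dotCLM x).hasFDerivAt
  exact (h.const_mul α).const_add 1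

lemma hasFDerivAt_Linv2 (α : ℝ) (x y : Fin n → ℝ)
    (h : (1 + α * ∑ m, x m * y m) ≠ 0) :
    HasFDerivAt (fun y' : Fin n → ℝ => (1 + α * ∑ m, x m * y' m)⁻¹)
      ((-((1 + α * ∑ m, x m * y m) ^ 2)⁻¹) • (α • dotCLM x)) y :=
  (hasDerivAt_inv h).comp_hasFDerivAt y (hasFDerivAt_L2 α x y)

lemma hasFDerivAt_Linv1 (α : ℝ) (y x : Fin n → ℝ)
    (h : (1 + α * ∑ m, x m * y m) ≠ 0) :
    HasFDerivAt (fun x' : Fin n → ℝ => (1 + α * ∑ m, x' m * y m)⁻¹)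
      ((-((1 + α * ∑ m, x m * y m) ^ 2)⁻¹) • (α • dotCLM y)) x :=
  (hasDerivAt_inv h).comp_hasFDerivAt x (hasFDerivAt_L1 α y x)

lemma hasFDerivAt_Lsq2 (α : ℝ) (x y : Fin n → ℝ) :
    HasFDerivAt (fun y' : Fin n → ℝ => (1 + α * ∑ m, x m * y' m) ^ 2)
      (((2:ℕ) * (1 + α * ∑ m, x m * y m) ^ (2-1)) • (α • dotCLM x)) y :=
  (hasDerivAt_pow 2 _).comp_hasFDerivAt y (hasFDerivAt_L2 α x y)

lemma hasFDerivAt_Lsqinv2 (α : ℝ) (x y : Fin n → ℝ)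
    (h : (1 + α * ∑ m, x m * y m) ≠ 0) :
    HasFDerivAt (fun y' : Fin n → ℝ => ((1 + α * ∑ m, x m * y' m) ^ 2)⁻¹)
      ((-(((1 + α * ∑ m, x m * y m) ^ 2) ^ 2)⁻¹) •
        (((2:ℕ) * (1 + α * ∑ m, x m * y m) ^ (2-1)) • (α • dotCLM x))) y :=
  (hasDerivAt_inv (pow_ne_zero 2 h)).comp_hasFDerivAt y (hasFDerivAt_Lsq2 α x y)

lemma hasFDerivAt_proj (i : Fin n) (y : Fin n → ℝ) :
    HasFDerivAt (fun y' : Fin n → ℝ => y' i)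
      (ContinuousLinearMap.proj (R := ℝ) (φ := fun _ : Fin n => ℝ) i) y :=
  (ContinuousLinearMap.proj (R := ℝ) (φ := fun _ : Fin n => ℝ) i).hasFDerivAt

lemma contL2 (α : ℝ) (x : Fin n → ℝ) :
    Continuous (fun y' : Fin n → ℝ => 1 + α * ∑ m, x m * y' m) := by fun_prop

lemma contL1 (α : ℝ) (y : Fin n → ℝ) :
    Continuous (fun x' : Fin n → ℝ => 1 + α * ∑ m, x' m * y m) := by fun_prop

section main

variable {α : ℝ} {c : (Fin n → ℝ) → (Fin n → ℝ) → ℝ}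

lemma P1 (hα : α ≠ 0)
    (hc : ∀ p q', c p q' = (1 / α) * Real.log (1 + α * ∑ i, p i * q' i))
    (x y : Fin n → ℝ) (hL : (1 + α * ∑ m, x m * y m) ≠ 0) (i : Fin n) :
    pd1 c i x y = y i * (1 + α * ∑ m, x m * y m)⁻¹ := by
  have hF : HasFDerivAt (fun x' : Fin n → ℝ => (1 / α) * Real.log (1 + α * ∑ m, x' m * y m))
      ((1 / α) • ((1 + α * ∑ m, x m * y m)⁻¹ • (α • dotCLM y))) x :=
    ((Real.hasDerivAt_log hL).comp_hasFDerivAt x (hasFDerivAt_L1 α y x)).const_mul (1 / α)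
  have hfun : (fun x' => c x' y)
      = fun x' : Fin n → ℝ => (1 / α) * Real.log (1 + α * ∑ m, x' m * y m) :=
    funext fun x' => hc x' y
  rw [show pd1 c i x y = fderiv ℝ (fun x' => c x' y) x (Pi.single i 1) from rfl,
    hfun, hF.fderiv]
  simp [dotCLM_single]
  field_simp

lemma P2 (hα : α ≠ 0)
    (hc : ∀ p q', c p q' = (1 / α) * Real.log (1 + α * ∑ i, p i * q' i))
    (x y : Fin n → ℝ) (hL : 0 < 1 + α * ∑ m, x m * y m) (i j : Fin n) :
    pd2 (pd1 c i) j x y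
      = (if i = j then 1 else 0) / (1 + α * ∑ m, x m * y m)
        - α * x j * y i / (1 + α * ∑ m, x m * y m) ^ 2 := by
  have hopen : IsOpen {y' : Fin n → ℝ | 0 < 1 + α * ∑ m, x m * y' m} :=
    isOpen_lt continuous_const (contL2 α x)
  have hev : (fun y' => pd1 c i x y')
      =ᶠ[nhds y] fun y' : Fin n → ℝ => y' i * (1 + α * ∑ m, x m * y' m)⁻¹ := by
    filter_upwards [hopen.mem_nhds hL] with y' hy'
    exact P1 hα hc x y' (ne_of_gt hy') i
  have hF : HasFDerivAt (fun y' : Fin n → ℝ => y' i * (1 + α * ∑ m, x m * y' m)⁻¹)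
      _ y := (hasFDerivAt_proj i y).mul (hasFDerivAt_Linv2 α x y (ne_of_gt hL))
  rw [show pd2 (pd1 c i) j x y
      = fderiv ℝ (fun y' => pd1 c i x y') y (Pi.single j 1) from rfl,
    hev.fderiv_eq, hF.fderiv]
  simp only [ContinuousLinearMap.add_apply, ContinuousLinearMap.sub_apply,
    ContinuousLinearMap.coe_smul', Pi.smul_apply, ContinuousLinearMap.proj_apply,
    dotCLM_single, smul_eq_mul, Pi.single_apply, pow_one, Nat.cast_ofNat]
  have h2 : (1 + α * ∑ m, x m * y m) ≠ 0 := ne_of_gt hL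
  generalize (if i = j then (1:ℝ) else 0) = A
  field_simp
  ring

lemma P3 (hα : α ≠ 0)
    (hc : ∀ p q', c p q' = (1 / α) * Real.log (1 + α * ∑ i, p i * q' i))
    (x y : Fin n → ℝ) (hL : 0 < 1 + α * ∑ m, x m * y m) (i j : Fin n) :
    pd1 (pd1 c i) j x y
      = -α * (y i * (y j * (((1 + α * ∑ m, x m * y m) ^ 2)⁻¹))) := by
  have hopen : IsOpen {x' : Fin n → ℝ | 0 < 1 + α * ∑ m, x' m * y m} :=
    isOpen_lt continuous_const (contL1 α y)
  have hev : (fun x' => pd1 c i x' y)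
      =ᶠ[nhds x] fun x' : Fin n → ℝ => y i * (1 + α * ∑ m, x' m * y m)⁻¹ := by
    filter_upwards [hopen.mem_nhds hL] with x' hx'
    exact P1 hα hc x' y (ne_of_gt hx') i
  have hF : HasFDerivAt (fun x' : Fin n → ℝ => y i * (1 + α * ∑ m, x' m * y m)⁻¹)
      _ x := (hasFDerivAt_Linv1 α y x (ne_of_gt hL)).const_mul (y i)
  rw [show pd1 (pd1 c i) j x y
      = fderiv ℝ (fun x' => pd1 c i x' y) x (Pi.single j 1) from rfl,
    hev.fderiv_eq, hF.fderiv]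
  simp [dotCLM_single]
  have h2 : (1 + α * ∑ m, x m * y m) ≠ 0 := ne_of_gt hL
  field_simp

set_option maxHeartbeats 1000000 in
lemma P4 (hα : α ≠ 0)
    (hc : ∀ p q', c p q' = (1 / α) * Real.log (1 + α * ∑ i, p i * q' i))
    (x y : Fin n → ℝ) (hL : 0 < 1 + α * ∑ m, x m * y m) (i j k : Fin n) :
    pd2 (pd1 (pd1 c i) j) k x y
      = -(α / (1 + α * ∑ m, x m * y m))
          * (y i * ((if j = k then 1 else 0) / (1 + α * ∑ m, x m * y m)
                - α * x k * y j / (1 + α * ∑ m, x m * y m) ^ 2)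
            + y j * ((if i = k then 1 else 0) / (1 + α * ∑ m, x m * y m)
                - α * x k * y i / (1 + α * ∑ m, x m * y m) ^ 2)) := by
  have hopen : IsOpen {y' : Fin n → ℝ | 0 < 1 + α * ∑ m, x m * y' m} :=
    isOpen_lt continuous_const (contL2 α x)
  have hev : (fun y' => pd1 (pd1 c i) j x y')
      =ᶠ[nhds y] fun y' : Fin n → ℝ =>
        -α * (y' i * (y' j * (((1 + α * ∑ m, x m * y' m) ^ 2)⁻¹))) := by
    filter_upwards [hopen.mem_nhds hL] with y' hy'
    exact P3 hα hc x y' hy' i j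
  have hF : HasFDerivAt (fun y' : Fin n → ℝ =>
      -α * (y' i * (y' j * (((1 + α * ∑ m, x m * y' m) ^ 2)⁻¹)))) _ y :=
    ((hasFDerivAt_proj i y).mul
      ((hasFDerivAt_proj j y).mul (hasFDerivAt_Lsqinv2 α x y (ne_of_gt hL)))).const_mul (-α)
  rw [show pd2 (pd1 (pd1 c i) j) k x y
      = fderiv ℝ (fun y' => pd1 (pd1 c i) j x y') y (Pi.single k 1) from rfl,
    hev.fderiv_eq, hF.fderiv]
  simp only [ContinuousLinearMap.add_apply, ContinuousLinearMap.sub_apply,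
    ContinuousLinearMap.coe_smul', Pi.smul_apply, ContinuousLinearMap.proj_apply,
    dotCLM_single, smul_eq_mul, Pi.single_apply, pow_one, Nat.cast_ofNat, Pi.mul_apply]
  have hLne : (1 + α * ∑ m, x m * y m) ≠ 0 := ne_of_gt hL
  generalize (if i = k then (1:ℝ) else 0) = A
  generalize (if j = k then (1:ℝ) else 0) = B
  field_simp
  ring

set_option maxHeartbeats 1000000 in
lemma P5 (hα : α ≠ 0)
    (hc : ∀ p q', c p q' = (1 / α) * Real.log (1 + α * ∑ i, p i * q' i))
    (x y : Fin n → ℝ) (hL : 0 < 1 + α * ∑ m, x m * y m) (i j k : Fin n) :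
    pd2 (pd2 (pd1 c i) j) k x y
      = -(α / (1 + α * ∑ m, x m * y m))
          * (x j * ((if i = k then 1 else 0) / (1 + α * ∑ m, x m * y m)
                - α * x k * y i / (1 + α * ∑ m, x m * y m) ^ 2)
            + x k * ((if i = j then 1 else 0) / (1 + α * ∑ m, x m * y m)
                - α * x j * y i / (1 + α * ∑ m, x m * y m) ^ 2)) := by
  have hopen : IsOpen {y' : Fin n → ℝ | 0 < 1 + α * ∑ m, x m * y' m} :=
    isOpen_lt continuous_const (contL2 α x)
  have hev : (fun y' => pd2 (pd1 c i) j x y')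
      =ᶠ[nhds y] fun y' : Fin n → ℝ =>
        (if i = j then 1 else 0) * (1 + α * ∑ m, x m * y' m)⁻¹
          - (α * x j) * (y' i * ((1 + α * ∑ m, x m * y' m) ^ 2)⁻¹) := by
    filter_upwards [hopen.mem_nhds hL] with y' hy'
    rw [P2 hα hc x y' hy' i j]
    have h1 : (1 + α * ∑ m, x m * y' m) ≠ 0 := ne_of_gt hy'
    generalize (if i = j then (1:ℝ) else 0) = A
    field_simp
  have hF : HasFDerivAt (fun y' : Fin n → ℝ =>
      (if i = j then 1 else 0) * (1 + α * ∑ m, x m * y' m)⁻¹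
        - (α * x j) * (y' i * ((1 + α * ∑ m, x m * y' m) ^ 2)⁻¹)) _ y :=
    ((hasFDerivAt_Linv2 α x y (ne_of_gt hL)).const_mul (if i = j then 1 else 0)).sub
      (((hasFDerivAt_proj i y).mul (hasFDerivAt_Lsqinv2 α x y (ne_of_gt hL))).const_mul
        (α * x j))
  rw [show pd2 (pd2 (pd1 c i) j) k x y
      = fderiv ℝ (fun y' => pd2 (pd1 c i) j x y') y (Pi.single k 1) from rfl,
    hev.fderiv_eq, hF.fderiv]
  simp only [ContinuousLinearMap.add_apply, ContinuousLinearMap.sub_apply,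
    ContinuousLinearMap.coe_smul', Pi.smul_apply, ContinuousLinearMap.proj_apply,
    dotCLM_single, smul_eq_mul, Pi.single_apply, pow_one, Nat.cast_ofNat]
  have hLne : (1 + α * ∑ m, x m * y m) ≠ 0 := ne_of_gt hL
  generalize (if i = j then (1:ℝ) else 0) = A
  generalize (if i = k then (1:ℝ) else 0) = B
  field_simp
  ring

end main

end LogCostAux

theorem log_cost_christoffel {n : ℕ} (α : ℝ) (hα : 0 < α)
    (c : (Fin n → ℝ) → (Fin n → ℝ) → ℝ)
    (hc : ∀ p q', c p q' = (1 / α) * Real.log (1 + α * ∑ i, p i * q' i))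
    (cinv : (Fin n → ℝ) → (Fin n → ℝ) → Matrix (Fin n) (Fin n) ℝ)
    (hcinv : ∀ p q', (∀ i, 0 < p i) → (∀ i, 0 < q' i) →
      (Matrix.of fun i j => pd2 (pd1 c i) j p q') * cinv p q' = 1 ∧
      cinv p q' * (Matrix.of fun i j => pd2 (pd1 c i) j p q') = 1) :
    ∀ p q' : Fin n → ℝ, (∀ i, 0 < p i) → (∀ i, 0 < q' i) →
      (∀ i j : Fin n, pd2 (pd1 c i) j p q'
          = (if i = j then 1 else 0) / (1 + α * ∑ m, p m * q' m)
            - α * p j * q' i / (1 + α * ∑ m, p m * q' m) ^ 2) ∧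
      (∀ i j k : Fin n,
        (∑ m, pd2 (pd1 (pd1 c i) j) m p q' * cinv p q' m k)
          = -(α / (1 + α * ∑ m, p m * q' m))
            * (q' i * (if j = k then 1 else 0) + q' j * (if i = k then 1 else 0))) ∧
      (∀ i j k : Fin n,
        (∑ m, cinv p q' k m * pd2 (pd2 (pd1 c m) i) j p q')
          = -(α / (1 + α * ∑ m, p m * q' m))
            * (p i * (if j = k then 1 else 0) + p j * (if i = k then 1 else 0))) := by
  intro p q' hp hq
  have hαne : α ≠ 0 := ne_of_gt hα
  have hS : 0 ≤ ∑ m, p m * q' m :=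
    Finset.sum_nonneg fun m _ => (mul_pos (hp m) (hq m)).le
  have hL : 0 < 1 + α * ∑ m, p m * q' m := by nlinarith [mul_nonneg hα.le hS]
  obtain ⟨h1, h2⟩ := hcinv p q' hp hq
  have e1 : ∀ a k : Fin n,
      ∑ m, pd2 (pd1 c a) m p q' * cinv p q' m k = if a = k then 1 else 0 := by
    intro a k
    have h := Matrix.ext_iff.2 h1 a k
    simpa [Matrix.mul_apply, Matrix.one_apply] using h
  have e2 : ∀ k a : Fin n,
      ∑ m, cinv p q' k m * pd2 (pd1 c m) a p q' = if a = k then 1 else 0 := by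
    intro k a
    have h := Matrix.ext_iff.2 h2 k a
    simp only [Matrix.mul_apply, Matrix.of_apply, Matrix.one_apply] at h
    rw [h]
    by_cases hka : k = a
    · simp [hka]
    · rw [if_neg hka, if_neg fun hh : a = k => hka hh.symm]
  refine ⟨fun i j => LogCostAux.P2 hαne hc p q' hL i j, fun i j k => ?_, fun i j k => ?_⟩
  · have key : ∀ m : Fin n, pd2 (pd1 (pd1 c i) j) m p q'
        = -(α / (1 + α * ∑ m, p m * q' m)) * q' i * pd2 (pd1 c j) m p q'
          + -(α / (1 + α * ∑ m, p m * q' m)) * q' j * pd2 (pd1 c i) m p q' := by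
      intro m
      rw [LogCostAux.P4 hαne hc p q' hL i j m, LogCostAux.P2 hαne hc p q' hL j m,
        LogCostAux.P2 hαne hc p q' hL i m]
      ring
    have hsum : ∑ m, pd2 (pd1 (pd1 c i) j) m p q' * cinv p q' m k
        = ∑ m, ((-(α / (1 + α * ∑ m, p m * q' m)) * q' i)
              * (pd2 (pd1 c j) m p q' * cinv p q' m k)
            + (-(α / (1 + α * ∑ m, p m * q' m)) * q' j)
              * (pd2 (pd1 c i) m p q' * cinv p q' m k)) :=
      Finset.sum_congr rfl fun m _ => by rw [key m]; ring
    rw [hsum, Finset.sum_add_distrib, ← Finset.mul_sum, ← Finset.mul_sum,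
      e1 j k, e1 i k]
    ring
  · have key : ∀ m : Fin n, pd2 (pd2 (pd1 c m) i) j p q'
        = -(α / (1 + α * ∑ m, p m * q' m)) * p i * pd2 (pd1 c m) j p q'
          + -(α / (1 + α * ∑ m, p m * q' m)) * p j * pd2 (pd1 c m) i p q' := by
      intro m
      rw [LogCostAux.P5 hαne hc p q' hL m i j, LogCostAux.P2 hαne hc p q' hL m j,
        LogCostAux.P2 hαne hc p q' hL m i]
      ring
    have hsum : ∑ m, cinv p q' k m * pd2 (pd2 (pd1 c m) i) j p q'
        = ∑ m, ((-(α / (1 + α * ∑ m, p m * q' m)) * p i)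
              * (cinv p q' k m * pd2 (pd1 c m) j p q')
            + (-(α / (1 + α * ∑ m, p m * q' m)) * p j)
              * (cinv p q' k m * pd2 (pd1 c m) i p q')) :=
      Finset.sum_congr rfl fun m _ => by rw [key m]; ring
    rw [hsum, Finset.sum_add_distrib, ← Finset.mul_sum, ← Finset.mul_sum,
      e2 k j, e2 k i]
    ring
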